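/- Let a be a filter of order p ≥ 2 with coefficients α_j = ∑_{q-r=j} a_q a_r, and set x_N = ∑_{j=N-ℓ+1}^{N+ℓ} |j|^{2H} ∑_{k=j-N}^ℓ α_k for N ≥ ℓ. Then x_N → 0 as N → ∞, for every H ∈ (0, 1); indeed x_N = O(N^{2H-2}). -/

import Mathlib

open Finset Filter Asymptotics

/-- Second-order Taylor bound for `t ↦ t^s` (rpow): two applications of the mean
value theorem. -/
lemma stmt14_taylor2 (s : ℝ) (hs : s ≤ 2) (m c y : ℝ) (hm : 0 < m) (hc : m ≤ c) (hy : m ≤ y) :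
    |y ^ s - c ^ s - s * c ^ (s - 1) * (y - c)| ≤
      |s * (s - 1)| * m ^ (s - 2) * (y - c) ^ 2 := by
  set K : ℝ := |s * (s - 1)| * m ^ (s - 2) with hK
  have hK0 : 0 ≤ K := mul_nonneg (abs_nonneg _) (Real.rpow_nonneg hm.le _)
  have hstep : ∀ t ∈ Set.Ici m, |s * t ^ (s - 1) - s * c ^ (s - 1)| ≤ K * |t - c| := by
    intro t ht
    have hdiff : ∀ u ∈ Set.Ici m, DifferentiableAt ℝ (fun u : ℝ => s * u ^ (s - 1)) u := by
      intro u hu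
      have hu0 : u ≠ 0 := (hm.trans_le hu).ne'
      exact ((Real.hasDerivAt_rpow_const (Or.inl hu0)).const_mul s).differentiableAt
    have hbound : ∀ u ∈ Set.Ici m, ‖deriv (fun u : ℝ => s * u ^ (s - 1)) u‖ ≤ K := by
      intro u hu
      have hu0 : (0:ℝ) < u := hm.trans_le hu
      have hd : deriv (fun u : ℝ => s * u ^ (s - 1)) u = s * ((s - 1) * u ^ (s - 1 - 1)) :=
        ((Real.hasDerivAt_rpow_const (Or.inl hu0.ne')).const_mul s).deriv
      rw [hd]
      have h1 : s - 1 - 1 = s - 2 := by ring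
      rw [h1, Real.norm_eq_abs, abs_mul, abs_mul, abs_of_nonneg (Real.rpow_nonneg hu0.le _)]
      calc |s| * (|s - 1| * u ^ (s - 2)) = |s * (s - 1)| * u ^ (s - 2) := by
            rw [abs_mul]; ring
        _ ≤ K := mul_le_mul_of_nonneg_left
            (Real.rpow_le_rpow_of_nonpos hm hu (by linarith)) (abs_nonneg _)
    have := Convex.norm_image_sub_le_of_norm_deriv_le hdiff hbound (convex_Ici m)
      (Set.mem_Ici.mpr hc) ht
    simpa [Real.norm_eq_abs] using this
  set g : ℝ → ℝ := fun t => t ^ s - c ^ s - s * c ^ (s - 1) * (t - c) with hg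
  have hgd : ∀ t : ℝ, 0 < t → HasDerivAt g (s * t ^ (s - 1) - s * c ^ (s - 1)) t := by
    intro t ht
    have h1 : HasDerivAt (fun t : ℝ => t ^ s) (s * t ^ (s - 1)) t :=
      Real.hasDerivAt_rpow_const (Or.inl ht.ne')
    have h2 : HasDerivAt (fun t : ℝ => c ^ s + s * c ^ (s - 1) * (t - c))
        (s * c ^ (s - 1)) t := by
      have := ((hasDerivAt_id t).sub_const c).const_mul (s * c ^ (s - 1))
      simpa using this.const_add (c ^ s)
    have h3 := h1.sub h2
    have h4 : g = (fun t : ℝ => t ^ s) - fun t => c ^ s + s * c ^ (s - 1) * (t - c) := by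
      funext u; simp only [hg, Pi.sub_apply]; ring
    rw [h4]; exact h3
  have hsub : Set.uIcc c y ⊆ Set.Ici m := by
    intro t ht
    rcases Set.mem_uIcc.mp ht with ⟨h1, h2⟩ | ⟨h1, h2⟩ <;>
      exact Set.mem_Ici.mpr (by linarith)
  have hgdiff : ∀ t ∈ Set.uIcc c y, DifferentiableAt ℝ g t := fun t ht =>
    (hgd t (hm.trans_le (hsub ht))).differentiableAt
  have hgbound : ∀ t ∈ Set.uIcc c y, ‖deriv g t‖ ≤ K * |y - c| := by
    intro t ht
    have hd : deriv g t = s * t ^ (s - 1) - s * c ^ (s - 1) :=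
      (hgd t (hm.trans_le (hsub ht))).deriv
    have htc : |t - c| ≤ |y - c| := by
      rcases Set.mem_uIcc.mp ht with ⟨h1, h2⟩ | ⟨h1, h2⟩
      · rw [abs_of_nonneg (by linarith : (0:ℝ) ≤ t - c),
          abs_of_nonneg (by linarith : (0:ℝ) ≤ y - c)]; linarith
      · rw [abs_of_nonpos (by linarith : t - c ≤ 0),
          abs_of_nonpos (by linarith : y - c ≤ 0)]; linarith
    rw [hd, Real.norm_eq_abs]
    exact (hstep t (hsub ht)).trans (mul_le_mul_of_nonneg_left htc hK0)
  have hfin := Convex.norm_image_sub_le_of_norm_deriv_le hgdiff hgbound (convex_uIcc c y)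
    (Set.left_mem_uIcc) (Set.right_mem_uIcc)
  have hgc : g c = 0 := by simp [hg]
  have hgy : g y = y ^ s - c ^ s - s * c ^ (s - 1) * (y - c) := rfl
  rw [hgc, sub_zero, Real.norm_eq_abs, Real.norm_eq_abs, hgy] at hfin
  calc |y ^ s - c ^ s - s * c ^ (s - 1) * (y - c)| ≤ K * |y - c| * |y - c| := hfin
    _ = K * (y - c) ^ 2 := by rw [mul_assoc, ← abs_mul, ← sq, abs_sq]

/-- Gauss sum over an integer interval. -/
lemma stmt14_gauss (b : ℤ) : ∀ m : ℤ, b - 1 ≤ m →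
    ∑ i ∈ Finset.Icc b m, (i : ℝ) = ((m:ℝ) + b) * ((m:ℝ) - b + 1) / 2 := by
  intro m hm
  obtain ⟨n, rfl⟩ : ∃ n : ℕ, m = b - 1 + n := ⟨(m - b + 1).toNat, by omega⟩
  induction n with
  | zero =>
    rw [Finset.Icc_eq_empty (by omega)]
    push_cast; ring
  | succ n ih =>
    have hins : Finset.Icc b (b - 1 + (n + 1 : ℕ)) =
        insert (b - 1 + (n + 1 : ℕ)) (Finset.Icc b (b - 1 + (n : ℕ))) := by
      ext t; simp [Finset.mem_Icc, Finset.mem_insert]; omega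
    rw [hins, Finset.sum_insert (by simp [Finset.mem_Icc]), ih (by omega)]
    push_cast; ring

/-- For a filter of order `p ≥ 2`, the boundary terms
`x_N = ∑_{j=N-ℓ+1}^{N+ℓ} |j|^{2H} ∑_{k=j-N}^{ℓ} α_k` tend to `0` as `N → ∞`;
indeed `x_N = O(N^{2H-2})`. -/
theorem stmt14 (ℓ p : ℕ) (a : ℕ → ℝ) (hp : 2 ≤ p)
    (hfilter : ∀ j < p, ∑ q ∈ Finset.range (ℓ + 1), (q : ℝ) ^ j * a q = 0)
    (α : ℤ → ℝ)
    (hα : ∀ j : ℤ, α j = ∑ q ∈ Finset.range (ℓ + 1), ∑ r ∈ Finset.range (ℓ + 1),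
      (if (q : ℤ) - (r : ℤ) = j then a q * a r else 0))
    (H : ℝ) (hH : H ∈ Set.Ioo (0 : ℝ) 1)
    (x : ℕ → ℝ)
    (hx : ∀ N : ℕ, x N = ∑ j ∈ Finset.Icc ((N : ℤ) - ℓ + 1) ((N : ℤ) + ℓ),
      |(j : ℝ)| ^ (2 * H) * ∑ k ∈ Finset.Icc (j - (N : ℤ)) (ℓ : ℤ), α k) :
    Filter.Tendsto x Filter.atTop (nhds 0) ∧
    (fun N : ℕ => x N) =O[Filter.atTop] (fun N : ℕ => (N : ℝ) ^ (2 * H - 2)) := by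
  obtain ⟨hH0, hH1⟩ := hH
  -- basic moment facts
  have hA0 : ∑ q ∈ Finset.range (ℓ + 1), a q = 0 := by
    simpa using hfilter 0 (by omega)
  have hA1 : ∑ q ∈ Finset.range (ℓ + 1), (q : ℝ) * a q = 0 := by
    simpa using hfilter 1 (by omega)
  set β : ℤ → ℝ := fun i => ∑ k ∈ Finset.Icc i (ℓ:ℤ), α k with hβ
  set I : Finset ℤ := Finset.Icc (1 - (ℓ:ℤ)) (ℓ:ℤ) with hI
  -- rewrite x N as a shifted sum
  have hx' : ∀ N : ℕ, x N = ∑ i ∈ I, |(N:ℝ) + (i:ℝ)| ^ (2*H) * β i := by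
    intro N
    rw [hx N]
    have hmap : Finset.Icc ((N:ℤ) - ℓ + 1) ((N:ℤ) + ℓ)
        = Finset.map (addLeftEmbedding (N:ℤ)) (Finset.Icc (1-(ℓ:ℤ)) (ℓ:ℤ)) := by
      rw [Finset.map_add_left_Icc]
      congr 1
      ring
    rw [hmap, Finset.sum_map]
    refine Finset.sum_congr rfl fun i hi => ?_
    simp only [addLeftEmbedding_apply]
    have e1 : (N:ℤ) + i - N = i := by ring
    rw [e1]
    congr 2
    push_cast
    ring
  -- the key double-sum identity
  have key : ∀ w : ℤ → ℝ, ∑ i ∈ I, w i * β i =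
      ∑ q ∈ Finset.range (ℓ+1), ∑ r ∈ Finset.range (ℓ+1),
        (∑ i ∈ Finset.Icc (1 - (ℓ:ℤ)) ((q:ℤ) - r), w i) * (a q * a r) := by
    intro w
    have h1 : ∀ i : ℤ, w i * β i = ∑ q ∈ Finset.range (ℓ+1), ∑ r ∈ Finset.range (ℓ+1),
        (if (q:ℤ) - r ∈ Finset.Icc i (ℓ:ℤ) then w i * (a q * a r) else 0) := by
      intro i
      rw [hβ]
      simp only [hα, Finset.mul_sum, mul_ite, mul_zero]
      rw [Finset.sum_comm]
      refine Finset.sum_congr rfl fun q _ => ?_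
      rw [Finset.sum_comm]
      refine Finset.sum_congr rfl fun r _ => ?_
      rw [Finset.sum_ite_eq]
    calc ∑ i ∈ I, w i * β i
        = ∑ i ∈ I, ∑ q ∈ Finset.range (ℓ+1), ∑ r ∈ Finset.range (ℓ+1),
            (if (q:ℤ) - r ∈ Finset.Icc i (ℓ:ℤ) then w i * (a q * a r) else 0) :=
          Finset.sum_congr rfl fun i _ => h1 i
      _ = ∑ q ∈ Finset.range (ℓ+1), ∑ r ∈ Finset.range (ℓ+1), ∑ i ∈ I,
            (if (q:ℤ) - r ∈ Finset.Icc i (ℓ:ℤ) then w i * (a q * a r) else 0) := by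
          rw [Finset.sum_comm]
          refine Finset.sum_congr rfl fun q _ => Finset.sum_comm
      _ = ∑ q ∈ Finset.range (ℓ+1), ∑ r ∈ Finset.range (ℓ+1),
            (∑ i ∈ Finset.Icc (1 - (ℓ:ℤ)) ((q:ℤ) - r), w i) * (a q * a r) := by
          refine Finset.sum_congr rfl fun q hq => Finset.sum_congr rfl fun r hr => ?_
          have hq' : q ≤ ℓ := by simpa [Nat.lt_succ_iff] using hq
          have hqr : (q:ℤ) - r ≤ (ℓ:ℤ) := by omega
          have e1 : ∀ i ∈ I, (if (q:ℤ) - r ∈ Finset.Icc i (ℓ:ℤ) then w i * (a q * a r) else 0)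
              = (if i ≤ (q:ℤ) - r then w i * (a q * a r) else 0) := by
            intro i _
            congr 1
            simp only [Finset.mem_Icc, eq_iff_iff]
            constructor
            · rintro ⟨h, _⟩; exact h
            · intro h; exact ⟨h, hqr⟩
          rw [Finset.sum_congr rfl e1, ← Finset.sum_filter]
          have e2 : I.filter (fun i => i ≤ (q:ℤ) - r) = Finset.Icc (1 - (ℓ:ℤ)) ((q:ℤ) - r) := by
            ext t
            simp only [Finset.mem_filter, hI, Finset.mem_Icc]
            omega
          rw [e2, Finset.sum_mul]
  -- the zeroth moment identity
  have M0 : ∑ i ∈ I, β i = 0 := by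
    have h := key (fun _ => (1:ℝ))
    simp only [one_mul] at h
    rw [h]
    have hcard : ∀ q ∈ Finset.range (ℓ+1), ∀ r ∈ Finset.range (ℓ+1),
        (∑ i ∈ Finset.Icc (1 - (ℓ:ℤ)) ((q:ℤ) - r), (1:ℝ)) = (q:ℝ) - r + ℓ := by
      intro q hq r hr
      have hr' : r ≤ ℓ := by simpa [Nat.lt_succ_iff] using hr
      rw [Finset.sum_const, Int.card_Icc, nsmul_eq_mul, mul_one]
      have h2 : (0:ℤ) ≤ (q:ℤ) - r + 1 - (1 - ℓ) := by omega
      have h3 := Int.toNat_of_nonneg h2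
      have h4 : (((((q:ℤ) - r + 1 - (1 - ℓ)).toNat : ℕ)) : ℝ) =
          ((((q:ℤ) - r + 1 - (1 - ℓ)) : ℤ) : ℝ) := by
        exact_mod_cast congrArg (fun z : ℤ => (z : ℝ)) h3
      rw [h4]; push_cast; ring
    calc ∑ q ∈ Finset.range (ℓ+1), ∑ r ∈ Finset.range (ℓ+1),
          (∑ i ∈ Finset.Icc (1 - (ℓ:ℤ)) ((q:ℤ) - r), (1:ℝ)) * (a q * a r)
        = ∑ q ∈ Finset.range (ℓ+1), ∑ r ∈ Finset.range (ℓ+1),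
          ((q:ℝ) - r + ℓ) * (a q * a r) := by
          refine Finset.sum_congr rfl fun q hq => Finset.sum_congr rfl fun r hr => ?_
          rw [hcard q hq r hr]
      _ = 0 := by
          refine Finset.sum_eq_zero fun q _ => ?_
          have e : ∀ r ∈ Finset.range (ℓ+1), ((q:ℝ) - r + ℓ) * (a q * a r)
              = (((q:ℝ) + ℓ) * a q) * a r - a q * ((r:ℝ) * a r) := fun r _ => by ring
          rw [Finset.sum_congr rfl e, Finset.sum_sub_distrib, ← Finset.mul_sum,
            ← Finset.mul_sum, hA0, hA1, mul_zero, mul_zero, sub_zero]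
  -- the first moment identity
  have M1 : ∑ i ∈ I, (i:ℝ) * β i = 0 := by
    rw [key (fun i => (i:ℝ))]
    have hgauss : ∀ q ∈ Finset.range (ℓ+1), ∀ r ∈ Finset.range (ℓ+1),
        (∑ i ∈ Finset.Icc (1 - (ℓ:ℤ)) ((q:ℤ) - r), (i:ℝ))
          = (((q:ℝ) - r) + 1 - ℓ) * (((q:ℝ) - r) + ℓ) / 2 := by
      intro q hq r hr
      have hr' : r ≤ ℓ := by simpa [Nat.lt_succ_iff] using hr
      rw [stmt14_gauss (1 - (ℓ:ℤ)) ((q:ℤ) - r) (by omega)]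
      push_cast; ring
    calc ∑ q ∈ Finset.range (ℓ+1), ∑ r ∈ Finset.range (ℓ+1),
          (∑ i ∈ Finset.Icc (1 - (ℓ:ℤ)) ((q:ℤ) - r), (i:ℝ)) * (a q * a r)
        = ∑ q ∈ Finset.range (ℓ+1), ∑ r ∈ Finset.range (ℓ+1),
          ((((q:ℝ) - r) + 1 - ℓ) * (((q:ℝ) - r) + ℓ) / 2) * (a q * a r) := by
          refine Finset.sum_congr rfl fun q hq => Finset.sum_congr rfl fun r hr => ?_
          rw [hgauss q hq r hr]
      _ = ∑ q ∈ Finset.range (ℓ+1),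
            (a q / 2) * (∑ r ∈ Finset.range (ℓ+1), (r:ℝ)^2 * a r) := by
          refine Finset.sum_congr rfl fun q _ => ?_
          have e : ∀ r ∈ Finset.range (ℓ+1),
              ((((q:ℝ) - r) + 1 - ℓ) * (((q:ℝ) - r) + ℓ) / 2) * (a q * a r)
              = ((((q:ℝ)^2 + q + ℓ - ℓ^2)/2 * a q) * a r
                  - (((2*(q:ℝ)+1)/2) * a q) * ((r:ℝ) * a r))
                  + (a q / 2) * ((r:ℝ)^2 * a r) := fun r _ => by ring
          rw [Finset.sum_congr rfl e, Finset.sum_add_distrib, Finset.sum_sub_distrib,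
            ← Finset.mul_sum, ← Finset.mul_sum, ← Finset.mul_sum, hA0, hA1,
            mul_zero, mul_zero, sub_zero, zero_add]
      _ = 0 := by
          rw [← Finset.sum_mul, ← Finset.sum_div, hA0, zero_div, zero_mul]
  -- the analytic estimate
  have hs0 : 0 < 2 * H := by positivity
  have hs2 : 2 * H < 2 := by linarith
  set B : ℝ := ∑ i ∈ I, |β i| with hB
  have hB0 : 0 ≤ B := Finset.sum_nonneg fun i _ => abs_nonneg _
  set C : ℝ := |2 * H * (2 * H - 1)| * (4 * (ℓ:ℝ)^2) * B with hC
  have hO : (fun N : ℕ => x N) =O[Filter.atTop] (fun N : ℕ => (N : ℝ) ^ (2 * H - 2)) := by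
    rw [isBigO_iff]
    refine ⟨C, ?_⟩
    filter_upwards [eventually_ge_atTop (2*ℓ+1)] with N hN
    have hNR : (2*(ℓ:ℝ)+1) ≤ (N:ℝ) := by
      have : ((2*ℓ+1 : ℕ) : ℝ) ≤ (N:ℝ) := by exact_mod_cast hN
      push_cast at this; linarith
    have hl0 : (0:ℝ) ≤ (ℓ:ℝ) := Nat.cast_nonneg ℓ
    have hN1 : (1:ℝ) ≤ (N:ℝ) := by linarith
    have hm0 : (0:ℝ) < (N:ℝ)/2 := by linarith
    have hpos : ∀ i ∈ I, (N:ℝ)/2 ≤ (N:ℝ) + (i:ℝ) := by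
      intro i hi
      have h1 : 1 - (ℓ:ℤ) ≤ i := (Finset.mem_Icc.mp hi).1
      have h1' : 1 - (ℓ:ℝ) ≤ (i:ℝ) := by exact_mod_cast h1
      linarith
    have hxN : x N = ∑ i ∈ I, ((N:ℝ) + (i:ℝ)) ^ (2*H) * β i := by
      rw [hx' N]
      refine Finset.sum_congr rfl fun i hi => ?_
      rw [abs_of_pos (by linarith [hpos i hi])]
    have hsplit : x N = ∑ i ∈ I,
        (((N:ℝ) + (i:ℝ)) ^ (2*H) - (N:ℝ) ^ (2*H) - (2*H) * (N:ℝ) ^ (2*H-1) * (i:ℝ)) * β i := by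
      have e : ∑ i ∈ I,
          (((N:ℝ) + (i:ℝ)) ^ (2*H) - (N:ℝ) ^ (2*H) - (2*H) * (N:ℝ) ^ (2*H-1) * (i:ℝ)) * β i
          = (∑ i ∈ I, ((N:ℝ) + (i:ℝ)) ^ (2*H) * β i)
            - (N:ℝ) ^ (2*H) * (∑ i ∈ I, β i)
            - (2*H) * (N:ℝ) ^ (2*H-1) * (∑ i ∈ I, (i:ℝ) * β i) := by
        rw [Finset.mul_sum, Finset.mul_sum, ← Finset.sum_sub_distrib, ← Finset.sum_sub_distrib]
        refine Finset.sum_congr rfl fun i _ => by ring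
      rw [e, M0, M1, mul_zero, mul_zero, sub_zero, sub_zero, hxN]
    have hterm : ∀ i ∈ I,
        |(((N:ℝ) + (i:ℝ)) ^ (2*H) - (N:ℝ) ^ (2*H) - (2*H) * (N:ℝ) ^ (2*H-1) * (i:ℝ)) * β i|
          ≤ (|2 * H * (2 * H - 1)| * ((N:ℝ)/2) ^ (2*H-2) * (ℓ:ℝ)^2) * |β i| := by
      intro i hi
      rw [abs_mul]
      refine mul_le_mul_of_nonneg_right ?_ (abs_nonneg _)
      have h1 := stmt14_taylor2 (2*H) (by linarith) ((N:ℝ)/2) (N:ℝ) ((N:ℝ)+(i:ℝ))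
        hm0 (by linarith) (hpos i hi)
      have e1 : ((N:ℝ) + (i:ℝ)) - (N:ℝ) = (i:ℝ) := by ring
      rw [e1] at h1
      have hi2 : ((i:ℝ))^2 ≤ (ℓ:ℝ)^2 := by
        have h2 := Finset.mem_Icc.mp hi
        have h2a : 1 - (ℓ:ℝ) ≤ (i:ℝ) := by exact_mod_cast h2.1
        have h2b : (i:ℝ) ≤ (ℓ:ℝ) := by exact_mod_cast h2.2
        exact sq_le_sq' (by linarith) h2b
      calc |((N:ℝ) + (i:ℝ)) ^ (2*H) - (N:ℝ) ^ (2*H) - (2*H) * (N:ℝ) ^ (2*H-1) * (i:ℝ)|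
          ≤ |2*H * (2*H - 1)| * ((N:ℝ)/2) ^ (2*H - 2) * ((i:ℝ))^2 := h1
        _ ≤ |2*H * (2*H - 1)| * ((N:ℝ)/2) ^ (2*H - 2) * (ℓ:ℝ)^2 := by
            refine mul_le_mul_of_nonneg_left hi2 ?_
            exact mul_nonneg (abs_nonneg _) (Real.rpow_nonneg hm0.le _)
    have hhalf : ((N:ℝ)/2) ^ (2*H-2) ≤ 4 * (N:ℝ) ^ (2*H-2) := by
      have hN0 : (0:ℝ) < (N:ℝ) := by linarith
      rw [Real.div_rpow hN0.le (by norm_num : (0:ℝ) ≤ 2)]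
      rw [div_le_iff₀ (by positivity)]
      have h4 : (2:ℝ) ^ (2*H-2) * 4 = 2 ^ (2*H-2) * 2 ^ (2:ℝ) := by
        congr 1
        rw [show ((2:ℝ):ℝ) ^ (2:ℝ) = (2:ℝ) ^ ((2:ℕ):ℝ) from by norm_num,
          Real.rpow_natCast]
        norm_num
      calc (N:ℝ) ^ (2*H-2) = (N:ℝ) ^ (2*H-2) * 1 := by ring
        _ ≤ (N:ℝ) ^ (2*H-2) * (2 ^ (2*H-2) * 2 ^ (2:ℝ)) := by
            refine mul_le_mul_of_nonneg_left ?_ (Real.rpow_nonneg hN0.le _)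
            rw [← Real.rpow_add (by norm_num : (0:ℝ) < 2)]
            have : (0:ℝ) ≤ 2*H - 2 + 2 := by linarith
            calc (1:ℝ) = (2:ℝ) ^ (0:ℝ) := by rw [Real.rpow_zero]
              _ ≤ (2:ℝ) ^ (2*H-2+2) := Real.rpow_le_rpow_of_exponent_le (by norm_num) this
        _ = 4 * (N:ℝ) ^ (2*H-2) * 2 ^ (2*H-2) := by rw [← h4]; ring
    have hfinal : |x N| ≤ C * (N:ℝ) ^ (2*H-2) := by
      calc |x N| ≤ ∑ i ∈ I,
            |(((N:ℝ) + (i:ℝ)) ^ (2*H) - (N:ℝ) ^ (2*H)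
              - (2*H) * (N:ℝ) ^ (2*H-1) * (i:ℝ)) * β i| := by
            rw [hsplit]; exact Finset.abs_sum_le_sum_abs _ _
        _ ≤ ∑ i ∈ I, (|2 * H * (2 * H - 1)| * ((N:ℝ)/2) ^ (2*H-2) * (ℓ:ℝ)^2) * |β i| :=
            Finset.sum_le_sum hterm
        _ = (|2 * H * (2 * H - 1)| * ((N:ℝ)/2) ^ (2*H-2) * (ℓ:ℝ)^2) * B := by
            rw [← Finset.mul_sum]
        _ ≤ (|2 * H * (2 * H - 1)| * (4 * (N:ℝ) ^ (2*H-2)) * (ℓ:ℝ)^2) * B := by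
            refine mul_le_mul_of_nonneg_right ?_ hB0
            refine mul_le_mul_of_nonneg_right ?_ (by positivity)
            exact mul_le_mul_of_nonneg_left hhalf (abs_nonneg _)
        _ = C * (N:ℝ) ^ (2*H-2) := by rw [hC]; ring
    rw [Real.norm_eq_abs, Real.norm_eq_abs,
      abs_of_nonneg (Real.rpow_nonneg (Nat.cast_nonneg N) _)]
    exact hfinal
  refine ⟨?_, hO⟩
  have ht : Filter.Tendsto (fun N : ℕ => (N:ℝ) ^ (2*H-2)) Filter.atTop (nhds 0) := by
    have h := tendsto_rpow_neg_atTop (y := 2 - 2*H) (by linarith)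
    have h2 := h.comp (tendsto_natCast_atTop_atTop (R := ℝ))
    have e : ((fun x : ℝ => x ^ (-(2 - 2*H))) ∘ (fun N : ℕ => (N:ℝ)))
        = fun N : ℕ => (N:ℝ) ^ (2*H-2) := by
      funext N
      simp [Function.comp, neg_sub]
    rwa [e] at h2
  exact hO.trans_tendsto ht
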